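/- arXiv:2207.05281 — 2 statements merged into one kernel-verified Lean document; each statement's English description precedes it below -/
import Mathlib

section
/- Let a ≥ 0, b ≥ 0 with a + b > 0, p ≥ 2 an integer, and l(x) = a x (1-x)^{p-1} + b (1-x)^p on [r_1, r_2] with 0 ≤ r_1 ≤ r_2 ≤ 1. Define δ = (a - bp)/((a-b)p) when a ≠ b. Then the point x_* given by: x_* = δ if a > bp and r_1 ≤ δ ≤ r_2; x_* = r_2 if a > bp and δ > r_2; x_* = r_1 otherwise, maximizes l(x) over x ∈ [r_1, r_2]. -/
open Set

lemma lderiv9 (a b : ℝ) (q : ℕ) (x : ℝ) :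
    HasDerivAt (fun x : ℝ => a * x * (1 - x) ^ (q + 1) + b * (1 - x) ^ (q + 2))
      ((1 - x) ^ q * ((a - b * ((q : ℝ) + 2)) - x * (((q : ℝ) + 2) * (a - b)))) x := by
  have h1 : HasDerivAt (fun x : ℝ => 1 - x) (-1) x := (hasDerivAt_id x).const_sub 1
  have h2 := h1.pow (q + 1)
  have h3 := h1.pow (q + 2)
  have h4 := ((hasDerivAt_id x).mul h2).const_mul a
  have h5 := h3.const_mul b
  have h6 := h4.add h5
  have e1 : q + 1 - 1 = q := rfl
  have e2 : q + 2 - 1 = q + 1 := rfl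
  have h7 : (fun x : ℝ => a * x * (1 - x) ^ (q + 1) + b * (1 - x) ^ (q + 2)) =
      ((fun y => a * ((id : ℝ → ℝ) * (fun x : ℝ => 1 - x) ^ (q + 1)) y) + fun y => b * ((fun x : ℝ => 1 - x) ^ (q + 2)) y) := by
    funext y; simp only [id, Pi.add_apply, Pi.mul_apply, Pi.pow_apply]; ring
  rw [h7]
  refine h6.congr_deriv ?_
  simp only [e1, e2, id, Pi.pow_apply]; push_cast; ring

lemma ldiff9 (a b : ℝ) (q : ℕ) :
    Differentiable ℝ (fun x : ℝ => a * x * (1 - x) ^ (q + 1) + b * (1 - x) ^ (q + 2)) :=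
  fun x => (lderiv9 a b q x).differentiableAt

lemma lmono9 (a b : ℝ) (q : ℕ) (u v : ℝ)
    (h : ∀ x, u < x → x < v →
      0 ≤ (1 - x) ^ q * ((a - b * ((q : ℝ) + 2)) - x * (((q : ℝ) + 2) * (a - b)))) :
    MonotoneOn (fun x : ℝ => a * x * (1 - x) ^ (q + 1) + b * (1 - x) ^ (q + 2)) (Set.Icc u v) := by
  apply monotoneOn_of_deriv_nonneg (convex_Icc u v)
    ((ldiff9 a b q).continuous.continuousOn)
    ((ldiff9 a b q).differentiableOn)
  intro x hx
  rw [interior_Icc] at hx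
  rw [(lderiv9 a b q x).deriv]
  exact h x hx.1 hx.2

lemma lanti9 (a b : ℝ) (q : ℕ) (u v : ℝ)
    (h : ∀ x, u < x → x < v →
      (1 - x) ^ q * ((a - b * ((q : ℝ) + 2)) - x * (((q : ℝ) + 2) * (a - b))) ≤ 0) :
    AntitoneOn (fun x : ℝ => a * x * (1 - x) ^ (q + 1) + b * (1 - x) ^ (q + 2)) (Set.Icc u v) := by
  apply antitoneOn_of_deriv_nonpos (convex_Icc u v)
    ((ldiff9 a b q).continuous.continuousOn)
    ((ldiff9 a b q).differentiableOn)
  intro x hx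
  rw [interior_Icc] at hx
  rw [(lderiv9 a b q x).deriv]
  exact h x hx.1 hx.2

theorem stmt9 (a b : ℝ) (ha : 0 ≤ a) (hb : 0 ≤ b) (hab : 0 < a + b)
    (p : ℕ) (hp : 2 ≤ p) (r₁ r₂ : ℝ) (hr₁ : 0 ≤ r₁) (hr₁₂ : r₁ ≤ r₂) (hr₂ : r₂ ≤ 1) :
    let l : ℝ → ℝ := fun x => a * x * (1 - x) ^ (p - 1) + b * (1 - x) ^ p
    let δ : ℝ := (a - b * p) / ((a - b) * p)
    let xstar : ℝ :=
      if a > b * p ∧ r₁ ≤ δ ∧ δ ≤ r₂ then δ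
      else if a > b * p ∧ r₂ < δ then r₂
      else r₁
    xstar ∈ Set.Icc r₁ r₂ ∧ ∀ x ∈ Set.Icc r₁ r₂, l x ≤ l xstar := by
  intro l δ xstar
  obtain ⟨q, rfl⟩ : ∃ q, p = q + 2 := ⟨p - 2, by omega⟩
  have hl : l = fun x : ℝ => a * x * (1 - x) ^ (q + 1) + b * (1 - x) ^ (q + 2) := rfl
  have hcast : ((q + 2 : ℕ) : ℝ) = (q : ℝ) + 2 := by push_cast; ring
  have hq0 : (0:ℝ) ≤ (q:ℝ) := Nat.cast_nonneg q
  by_cases hA : a > b * ((q:ℝ) + 2)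
  · have hA' : a > b * ((q + 2 : ℕ) : ℝ) := by rw [hcast]; exact hA
    have hab' : b < a := by nlinarith
    have hD : (0:ℝ) < (a - b) * ((q:ℝ) + 2) := by nlinarith
    have hδeq : δ = (a - b * ((q:ℝ)+2)) / ((a - b) * ((q:ℝ)+2)) := by
      show (a - b * ((q+2:ℕ):ℝ)) / ((a - b) * ((q+2:ℕ):ℝ)) = _
      rw [hcast]
    have hδpos : 0 < δ := by
      rw [hδeq]
      exact div_pos (by linarith) hD
    have ha0 : 0 < a := by nlinarith
    have hδlt1 : δ < 1 := by
      rw [hδeq, div_lt_one hD]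
      nlinarith
    have hsign : ∀ x : ℝ, (a - b * ((q:ℝ)+2)) - x * (((q:ℝ)+2) * (a - b))
        = ((a - b) * ((q:ℝ)+2)) * (δ - x) := by
      intro x
      rw [hδeq, mul_sub ((a - b) * ((q:ℝ)+2)), mul_div_cancel₀ _ hD.ne']
      ring
    have hpos : ∀ y : ℝ, y < 1 → y ≤ δ →
        0 ≤ (1 - y) ^ q * ((a - b * ((q : ℝ) + 2)) - y * (((q : ℝ) + 2) * (a - b))) := by
      intro y h1 h2
      rw [hsign]
      exact mul_nonneg (pow_nonneg (by linarith) q)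
        (mul_nonneg hD.le (by linarith))
    have hneg : ∀ y : ℝ, y ≤ 1 → δ ≤ y →
        (1 - y) ^ q * ((a - b * ((q : ℝ) + 2)) - y * (((q : ℝ) + 2) * (a - b))) ≤ 0 := by
      intro y h1 h2
      rw [hsign]
      exact mul_nonpos_of_nonneg_of_nonpos (pow_nonneg (by linarith) q)
        (mul_nonpos_of_nonneg_of_nonpos hD.le (by linarith))
    by_cases hB : r₁ ≤ δ ∧ δ ≤ r₂
    · have hx : xstar = δ := if_pos ⟨hA', hB⟩
      rw [hx]
      refine ⟨⟨hB.1, hB.2⟩, ?_⟩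
      intro x hx'
      rw [hl]
      have hmono := lmono9 a b q r₁ δ
        (fun y h1 h2 => hpos y (lt_of_lt_of_le h2 hδlt1.le) h2.le)
      have hanti := lanti9 a b q δ r₂
        (fun y h1 h2 => hneg y (le_trans h2.le hr₂) h1.le)
      rcases le_total x δ with h | h
      · exact hmono ⟨hx'.1, h⟩ ⟨hB.1, le_refl δ⟩ h
      · exact hanti ⟨le_refl δ, hB.2⟩ ⟨h, hx'.2⟩ h
    · by_cases hC : r₂ < δ
      · have hx : xstar = r₂ := by
          show (if _ then _ else if _ then _ else _) = r₂
          rw [if_neg (fun h => hB h.2), if_pos ⟨hA', hC⟩]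
        rw [hx]
        refine ⟨⟨hr₁₂, le_refl r₂⟩, ?_⟩
        intro x hx'
        rw [hl]
        have hmono := lmono9 a b q r₁ r₂
          (fun y h1 h2 => hpos y (lt_of_lt_of_le h2 hr₂) (le_of_lt (lt_trans h2 hC)))
        exact hmono ⟨hx'.1, hx'.2⟩ ⟨hr₁₂, le_refl r₂⟩ hx'.2
      · have hδr₁ : δ < r₁ := by
          by_contra h
          push_neg at h
          exact hB ⟨h, not_lt.mp hC⟩
        have hx : xstar = r₁ := by
          show (if _ then _ else if _ then _ else _) = r₁
          rw [if_neg (fun h => hB h.2), if_neg (fun h => hC h.2)]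
        rw [hx]
        refine ⟨⟨le_refl r₁, hr₁₂⟩, ?_⟩
        intro x hx'
        rw [hl]
        have hanti := lanti9 a b q r₁ r₂
          (fun y h1 h2 => hneg y (le_trans h2.le hr₂) (le_of_lt (lt_trans hδr₁ h1)))
        exact hanti ⟨le_refl r₁, hr₁₂⟩ ⟨hx'.1, hx'.2⟩ hx'.1
  · push_neg at hA
    have hA' : ¬ (a > b * ((q + 2 : ℕ) : ℝ)) := by rw [hcast]; exact not_lt.mpr hA
    have hx : xstar = r₁ := by
      show (if _ then _ else if _ then _ else _) = r₁
      rw [if_neg (fun h => hA' h.1), if_neg (fun h => hA' h.1)]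
    rw [hx]
    refine ⟨⟨le_refl r₁, hr₁₂⟩, ?_⟩
    intro x hx'
    rw [hl]
    have hanti := lanti9 a b q r₁ r₂ (by
      intro y h1 h2
      have hy0 : 0 ≤ y := le_trans hr₁ h1.le
      have hy1 : y ≤ 1 := le_trans h2.le hr₂
      have hf1 : (0:ℝ) ≤ (1 - y) ^ q := pow_nonneg (by linarith) q
      have hf2 : (a - b * ((q : ℝ) + 2)) - y * (((q : ℝ) + 2) * (a - b)) ≤ 0 := by
        nlinarith [mul_nonneg (sub_nonneg.mpr hy1) (sub_nonneg.mpr hA),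
          mul_nonneg (mul_nonneg ha hy0) (by linarith : (0:ℝ) ≤ (q:ℝ) + 1)]
      exact mul_nonpos_of_nonneg_of_nonpos hf1 hf2)
    exact hanti ⟨le_refl r₁, hr₁₂⟩ ⟨hx'.1, hx'.2⟩ hx'.1
end

section
/- Let 0 < c_1 ≤ c_2 ≤ ... ≤ c_m ≤ 1 with c_1 < 1/m and ∑_i c_i > 1. Then there exist k ∈ {1,...,m-1} and u ∈ [c_k, c_{k+1}) with ∑_{i=1}^k c_i + (m-k) u = 1, and the vector w_* = (c_1, ..., c_k, u, ..., u) maximizes f(w) = ∏_{i=1}^m w_i over S = {w ∈ ℝ^m : 0 ≤ w_i ≤ c_i, ∑_i w_i = 1}. -/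
theorem stmt18 (m : ℕ) (hm : 2 ≤ m) (c : Fin m → ℝ)
    (hc : ∀ i, 0 < c i ∧ c i ≤ 1)
    (hmono : ∀ i j : Fin m, i ≤ j → c i ≤ c j)
    (hc1 : c ⟨0, by omega⟩ < 1 / m) (hcsum : 1 < ∑ i, c i) :
    ∃ k : ℕ, ∃ hk1 : 1 ≤ k, ∃ hkm : k < m, ∃ u : ℝ,
      c ⟨k - 1, by omega⟩ ≤ u ∧ u < c ⟨k, hkm⟩ ∧
      (∑ i ∈ Finset.univ.filter (fun i : Fin m => (i : ℕ) < k), c i)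
        + ((m : ℝ) - k) * u = 1 ∧
      (let wstar : Fin m → ℝ := fun i => if (i : ℕ) < k then c i else u
       ((∀ i, 0 ≤ wstar i ∧ wstar i ≤ c i) ∧ ∑ i, wstar i = 1) ∧
       ∀ w : Fin m → ℝ, (∀ i, 0 ≤ w i ∧ w i ≤ c i) → (∑ i, w i = 1) →
         ∏ i, w i ≤ ∏ i, wstar i) := by
  classical
  set c' : ℕ → ℝ := fun j => if h : j < m then c ⟨j, h⟩ else 0 with hc'def
  have hc'eq : ∀ (j : ℕ) (h : j < m), c' j = c ⟨j, h⟩ := by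
    intro j h; simp [c', h]
  set SS : ℕ → ℝ := fun j => ∑ i ∈ Finset.range j, c' i with hSSdef
  have hfilter : ∀ j : ℕ, j ≤ m →
      (∑ i ∈ Finset.univ.filter (fun i : Fin m => (i : ℕ) < j), c i) = SS j := by
    intro j hj
    rw [Finset.sum_filter]
    have h1 : ∀ i : Fin m, (if (i : ℕ) < j then c i else 0)
        = (fun n => if n < j then c' n else 0) (i : ℕ) := by
      intro i; simp only [hc'eq _ i.isLt]
    have h2 : ∑ i : Fin m, (if (i : ℕ) < j then c i else 0)
        = ∑ i ∈ Finset.range m, (if i < j then c' i else 0) := by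
      rw [← Fin.sum_univ_eq_sum_range (fun n => if n < j then c' n else 0) m]
      exact Finset.sum_congr rfl (fun i _ => h1 i)
    rw [h2, ← Finset.sum_filter]
    have e1 : (Finset.range m).filter (fun n => n < j) = Finset.range j := by
      ext n; simp; omega
    rw [e1]
  have hmpos : (0 : ℝ) < m := by positivity
  -- the property defining k
  set P : ℕ → Prop := fun j => j < m ∧ 1 < SS j + ((m : ℝ) - j) * c' j with hPdef
  have hSSm : SS m = ∑ i, c i := by
    rw [← hfilter m le_rfl]
    congr 1
    ext i; simp [i.isLt]
  have hex : P (m - 1) := by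
    constructor
    · omega
    · have h1 : SS (m - 1) + c' (m - 1) = SS m := by
        have : m = (m - 1) + 1 := by omega
        rw [this, hSSdef]
        simp [Finset.sum_range_succ]
      have h2 : ((m : ℝ) - ((m : ℕ) - 1 : ℕ)) = 1 := by
        have : ((m - 1 : ℕ) : ℝ) = (m : ℝ) - 1 := by
          push_cast [Nat.one_le_iff_ne_zero.mpr (by omega : m ≠ 0)]; ring
        rw [this]; ring
      rw [h2, one_mul, h1, hSSm]
      exact hcsum
  set k := Nat.find ⟨m - 1, hex⟩ with hkdef
  have hkP : P k := Nat.find_spec ⟨m - 1, hex⟩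
  obtain ⟨hkm, hAk⟩ := hkP
  have hk1 : 1 ≤ k := by
    by_contra h
    have hk0 : k = 0 := by omega
    rw [hk0] at hAk
    simp only [hSSdef] at hAk
    simp only [Finset.range_zero, Finset.sum_empty, Nat.cast_zero, sub_zero,
      zero_add] at hAk
    have hc0 : c' 0 = c ⟨0, by omega⟩ := hc'eq 0 (by omega)
    rw [hc0] at hAk
    have : (m : ℝ) * c ⟨0, by omega⟩ < (m : ℝ) * (1 / m) := by
      exact mul_lt_mul_of_pos_left hc1 hmpos
    rw [mul_one_div, div_self (ne_of_gt hmpos)] at this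
    linarith
  have hkmin : ¬ P (k - 1) := Nat.find_min ⟨m - 1, hex⟩ (by omega)
  have hAk1 : SS (k - 1) + ((m : ℝ) - (k - 1 : ℕ)) * c' (k - 1) ≤ 1 := by
    by_contra h
    exact hkmin ⟨by omega, by linarith⟩
  have hSSk : SS k = SS (k - 1) + c' (k - 1) := by
    have : k = (k - 1) + 1 := by omega
    rw [this, hSSdef]
    simp [Finset.sum_range_succ]
  have hcast : ((k - 1 : ℕ) : ℝ) = (k : ℝ) - 1 := by
    push_cast [hk1]; ring
  have hA' : SS k + ((m : ℝ) - k) * c' (k - 1) ≤ 1 := by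
    rw [hSSk]; rw [hcast] at hAk1; linarith
  have hmk : (0 : ℝ) < (m : ℝ) - k := by
    have : (k : ℝ) < m := by exact_mod_cast hkm
    linarith
  set u : ℝ := (1 - SS k) / ((m : ℝ) - k) with hudef
  have husum : SS k + ((m : ℝ) - k) * u = 1 := by
    rw [hudef, mul_div_cancel₀ _ (ne_of_gt hmk)]; ring
  have hu_lt : u < c' k := by
    rw [hudef, div_lt_iff₀ hmk]; nlinarith
  have hu_ge : c' (k - 1) ≤ u := by
    rw [hudef, le_div_iff₀ hmk]; nlinarith
  have hckm1 : c' (k - 1) = c ⟨k - 1, by omega⟩ := hc'eq (k - 1) (by omega)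
  have hckk : c' k = c ⟨k, hkm⟩ := hc'eq k hkm
  have hu_pos : 0 < u := lt_of_lt_of_le (by rw [hckm1]; exact (hc _).1) hu_ge
  -- c i ≤ u for i < k ; u ≤ c i for i ≥ k
  have hciu : ∀ i : Fin m, (i : ℕ) < k → c i ≤ u := by
    intro i hik
    have h1 : c i ≤ c ⟨k - 1, by omega⟩ := hmono i ⟨k - 1, by omega⟩ (by
      simp [Fin.le_def]; omega)
    rw [← hckm1] at h1
    linarith
  have huci : ∀ i : Fin m, ¬ (i : ℕ) < k → u ≤ c i := by
    intro i hik
    have h1 : c ⟨k, hkm⟩ ≤ c i := hmono ⟨k, hkm⟩ i (by simp [Fin.le_def]; omega)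
    rw [← hckk] at h1
    linarith
  refine ⟨k, hk1, hkm, u, by rw [← hckm1]; exact hu_ge, by rw [← hckk]; exact hu_lt,
    by rw [hfilter k hkm.le]; exact husum, ?_⟩
  intro wstar
  have hwseq : ∀ i : Fin m, wstar i = if (i : ℕ) < k then c i else u := fun i => rfl
  have hwspos : ∀ i, 0 < wstar i := by
    intro i; rw [hwseq]
    by_cases hik : (i : ℕ) < k
    · simp [hik]; exact (hc i).1
    · simp [hik]; exact hu_pos
  have hwsle : ∀ i, wstar i ≤ c i := by
    intro i; rw [hwseq]
    by_cases hik : (i : ℕ) < k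
    · simp [hik]
    · simp [hik]; exact huci i hik
  have hwssum : ∑ i, wstar i = 1 := by
    have h1 : ∀ i : Fin m, wstar i = (fun n => if n < k then c' n else u) (i : ℕ) := by
      intro i; rw [hwseq]; simp only [hc'eq _ i.isLt]
    have h2 : ∑ i, wstar i = ∑ i ∈ Finset.range m, (if i < k then c' i else u) := by
      rw [← Fin.sum_univ_eq_sum_range (fun n => if n < k then c' n else u) m]
      exact Finset.sum_congr rfl (fun i _ => h1 i)
    rw [h2, Finset.sum_ite]
    have e1 : (Finset.range m).filter (fun n => n < k) = Finset.range k := by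
      ext n; simp; omega
    have e2 : (Finset.range m).filter (fun n => ¬ n < k) = Finset.Ico k m := by
      ext n; simp; omega
    rw [e1, e2, Finset.sum_const, Nat.card_Ico, nsmul_eq_mul]
    have : ((m - k : ℕ) : ℝ) = (m : ℝ) - k := by
      push_cast [hkm.le]; ring
    rw [this]
    rw [hSSdef] at husum
    linarith [husum]
  refine ⟨⟨fun i => ⟨(hwspos i).le, hwsle i⟩, hwssum⟩, ?_⟩
  intro w hw hwsum
  have hpws : 0 < ∏ i, wstar i := Finset.prod_pos fun i _ => hwspos i
  by_cases hz : ∀ i, 0 < w i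
  · -- all positive: use log concavity
    have key : ∑ i, (w i - wstar i) / wstar i ≤ 0 := by
      have h0 : ∑ i, (w i - wstar i) * (1 / u) = 0 := by
        rw [← Finset.sum_mul, Finset.sum_sub_distrib, hwsum, hwssum]; ring
      have hsplit : ∑ i, (w i - wstar i) / wstar i
          = (∑ i, (w i - wstar i) * (1 / wstar i - 1 / u))
            + ∑ i, (w i - wstar i) * (1 / u) := by
        rw [← Finset.sum_add_distrib]
        apply Finset.sum_congr rfl
        intro i _
        have hne : wstar i ≠ 0 := ne_of_gt (hwspos i)
        field_simp
        ring
      rw [hsplit, h0, add_zero]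
      apply Finset.sum_nonpos
      intro i _
      by_cases hik : (i : ℕ) < k
      · have h1 : w i ≤ c i := (hw i).2
        have h2 : c i ≤ u := hciu i hik
        have h3 : wstar i = c i := by rw [hwseq]; simp [hik]
        rw [h3]
        apply mul_nonpos_of_nonpos_of_nonneg
        · linarith
        · have : 1 / u ≤ 1 / c i := by
            apply one_div_le_one_div_of_le (hc i).1 h2
          linarith
      · have h3 : wstar i = u := by rw [hwseq]; simp [hik]
        rw [h3, sub_self, mul_zero]
    have hlog : ∑ i, Real.log (w i) ≤ ∑ i, Real.log (wstar i) := by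
      have hterm : ∀ i : Fin m,
          Real.log (w i) - Real.log (wstar i) ≤ (w i - wstar i) / wstar i := by
        intro i
        have h1 := Real.log_le_sub_one_of_pos (div_pos (hz i) (hwspos i))
        rw [Real.log_div (ne_of_gt (hz i)) (ne_of_gt (hwspos i))] at h1
        have h2 : w i / wstar i - 1 = (w i - wstar i) / wstar i := by
          rw [sub_div, div_self (ne_of_gt (hwspos i))]
        linarith
      have h3 := Finset.sum_le_sum (fun i (_ : i ∈ Finset.univ) => hterm i)
      rw [Finset.sum_sub_distrib] at h3
      linarith
    have hpw : 0 < ∏ i, w i := Finset.prod_pos fun i _ => hz i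
    have hfin : Real.log (∏ i, w i) ≤ Real.log (∏ i, wstar i) := by
      rw [Real.log_prod (fun i _ => ne_of_gt (hz i)),
        Real.log_prod (fun i _ => ne_of_gt (hwspos i))]
      exact hlog
    calc ∏ i, w i = Real.exp (Real.log (∏ i, w i)) := (Real.exp_log hpw).symm
      _ ≤ Real.exp (Real.log (∏ i, wstar i)) := Real.exp_le_exp.mpr hfin
      _ = ∏ i, wstar i := Real.exp_log hpws
  · -- some coordinate is zero
    push_neg at hz
    obtain ⟨i, hi⟩ := hz
    have hwi : w i = 0 := le_antisymm hi (hw i).1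
    have : ∏ j, w j = 0 := Finset.prod_eq_zero (Finset.mem_univ i) hwi
    rw [this]
    exact hpws.le
end
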